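/- Let G be a group, let 𝓕 be a collection of finite subsets of G, and let A ⊆ G be 𝓕-tileable, witnessed by T ⊆ G and F_t ∈ 𝓕 (t ∈ T) with A = ⨆_{t∈T} F_t t. Let S ⊆ G be finite and let D = (⋃𝓕)(⋃𝓕)⁻¹. If for some t ∈ T the tile F_t t intersects S ∖ ∂_D S, then F_t t ⊆ S. -/
import Mathlib


open Set
open scoped Pointwise

/-- The `K`-boundary of a subset `F` of a group `G`. -/
def kBoundary {G : Type*} [Group G] (K F : Set G) : Set G :=
  {t | (∃ k ∈ K, k * t ∈ F) ∧ (∃ k ∈ K, k * t ∉ F)}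

/-- Let `A ⊆ G` be `𝓕`-tileable, witnessed by `T` and tiles `F_t t` partitioning `A`,
let `S ⊆ G` be finite, and let `D = (⋃𝓕)(⋃𝓕)⁻¹`. If for some `t ∈ T` the tile `F_t t`
meets `S ∖ ∂_D S`, then `F_t t ⊆ S`. -/
theorem tile_inside {G : Type*} [Group G] (𝓕 : Set (Set G)) (A : Set G)
    (T : Set G) (Ft : G → Set G) (hFt : ∀ t ∈ T, Ft t ∈ 𝓕)
    (hA : A = ⋃ t ∈ T, (fun s => s * t) '' Ft t)
    (hdisj : T.PairwiseDisjoint fun t => (fun s => s * t) '' Ft t)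
    (S : Set G) (hS : S.Finite)
    (t : G) (ht : t ∈ T)
    (hmeet : (((fun s => s * t) '' Ft t) ∩ (S \ kBoundary ((⋃₀ 𝓕) * (⋃₀ 𝓕)⁻¹) S)).Nonempty) :
    (fun s => s * t) '' Ft t ⊆ S := by
  obtain ⟨s, ⟨f, hf, hfs⟩, hsS, hsB⟩ := hmeet
  have hFt𝓕 := hFt t ht
  have hfD : ∀ f' ∈ Ft t, f' * f⁻¹ ∈ (⋃₀ 𝓕) * (⋃₀ 𝓕)⁻¹ :=
    fun f' hf' => mul_mem_mul ⟨Ft t, hFt𝓕, hf'⟩ (inv_mem_inv.mpr ⟨Ft t, hFt𝓕, hf⟩)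
  have hall : ∀ k ∈ (⋃₀ 𝓕) * (⋃₀ 𝓕)⁻¹, k * s ∈ S := by
    intro k hk
    by_contra hks
    exact hsB ⟨⟨f * f⁻¹, hfD f hf, by simpa [← hfs, mul_assoc] using hsS⟩, ⟨k, hk, hks⟩⟩
  rintro x ⟨f', hf', rfl⟩
  have := hall (f' * f⁻¹) (hfD f' hf')
  simpa [← hfs, mul_assoc] using this
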